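/- If 0 < a < 1 and 0 < b < 1, then the slope of the line through the point (φ_e, ρ(φ_e)) on the screening curve and the invariant point (1,1) equals √((1−b)/a); that is, (1 − ρ(φ_e))/(1 − φ_e) = √((1−b)/a). -/

import Mathlib

/-- The screening curve: positive predictive value as a function of
pretest probability (prevalence) `φ`, for sensitivity `a` and specificity `b`. -/
noncomputable def screeningCurve (a b φ : ℝ) : ℝ :=
  a * φ / (a * φ + (1 - b) * (1 - φ))

/-- The prevalence threshold. -/
noncomputable def prevalenceThreshold (a b : ℝ) : ℝ :=
  Real.sqrt (1 - b) / (Real.sqrt a + Real.sqrt (1 - b))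

/-- the slope of the line from the prevalence threshold point on
the screening curve to the invariant point (1,1) equals `√((1−b)/a)`. -/
theorem slope_threshold_to_one (a b : ℝ) (ha : 0 < a) (ha' : a < 1)
    (hb : 0 < b) (hb' : b < 1) :
    (1 - screeningCurve a b (prevalenceThreshold a b)) /
        (1 - prevalenceThreshold a b) =
      Real.sqrt ((1 - b) / a) := by
  set s := Real.sqrt a with hs
  set t := Real.sqrt (1 - b) with ht
  have hs0 : 0 < s := Real.sqrt_pos.mpr ha
  have ht0 : 0 < t := Real.sqrt_pos.mpr (by linarith)
  have hsa : s ^ 2 = a := Real.sq_sqrt ha.le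
  have htb : t ^ 2 = 1 - b := Real.sq_sqrt (by linarith)
  have hst : (0:ℝ) < s + t := by linarith
  have hrhs : Real.sqrt ((1 - b) / a) = t / s := Real.sqrt_div (by linarith) a
  have hφ : prevalenceThreshold a b = t / (s + t) := rfl
  have hden : a * (t / (s + t)) + (1 - b) * (1 - t / (s + t)) = s * t := by
    rw [← hsa, ← htb]; field_simp; ring
  have hkey : screeningCurve a b (prevalenceThreshold a b) = s / (s + t) := by
    rw [screeningCurve, hφ, hden, ← hsa]
    field_simp
  rw [hkey, hφ, hrhs]
  field_simp
  rw [show s + t - s = t by ring, show s + t - t = s by ring]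
  exact mul_div_cancel_left₀ t hs0.ne'
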